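/- Let H be a hiding set for a lattice-convex set X ⊆ ℤ^d, i.e., a set of points in (aff(X) ∩ ℤ^d) \ X such that for all distinct x, y ∈ H the segment conv({x,y}) intersects conv(X). Then any polyhedron P = {x : Ax ≤ b} with P ∩ ℤ^d = X has at least |H| facets; that is, any finite system of linear inequalities whose integer solution set equals X contains at least |H| inequalities. -/

import Mathlib

/-- Coercion of an integer point to a real point. -/
def toR {d : ℕ} (z : Fin d → ℤ) : Fin d → ℝ := fun i => (z i : ℝ)

/-- any relaxation of a lattice-convex set `X` has at least `|H|`
inequalities, for every hiding set `H` of `X`. -/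
theorem hiding_set_lower_bound (d m : ℕ) (X : Set (Fin d → ℤ))
    (hX : ∀ z : Fin d → ℤ, toR z ∈ convexHull ℝ (toR '' X) ↔ z ∈ X)
    (H : Finset (Fin d → ℤ))
    (hHaff : ∀ h ∈ H, toR h ∈ (affineSpan ℝ (toR '' X) : Set (Fin d → ℝ)))
    (hHX : ∀ h ∈ H, h ∉ X)
    (hHhide : ∀ x ∈ H, ∀ y ∈ H, x ≠ y →
      (convexHull ℝ {toR x, toR y} ∩ convexHull ℝ (toR '' X)).Nonempty)
    (A : Fin m → Fin d → ℝ) (b : Fin m → ℝ)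
    (hrel : ∀ z : Fin d → ℤ, (∀ i, ∑ j, A i j * (z j : ℝ) ≤ b i) ↔ z ∈ X) :
    H.card ≤ m := by
  classical
  -- each h ∈ H violates some inequality
  have hviol : ∀ h ∈ H, ∃ i, b i < ∑ j, A i j * (h j : ℝ) := by
    intro h hh
    by_contra hc
    push_neg at hc
    exact hHX h hh ((hrel h).mp hc)
  choose f hf using hviol
  -- linearity of each row functional
  have hlin : ∀ i : Fin m, IsLinearMap ℝ (fun p : Fin d → ℝ => ∑ j, A i j * p j) := by
    intro i
    constructor
    · intro p q
      rw [← Finset.sum_add_distrib]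
      exact Finset.sum_congr rfl fun j _ => by simp [Pi.add_apply]; ring
    · intro c p
      rw [smul_eq_mul, Finset.mul_sum]
      exact Finset.sum_congr rfl fun j _ => by simp [Pi.smul_apply, smul_eq_mul]; ring
  -- all inequalities valid on convexHull of X
  have hvalid : ∀ i : Fin m, ∀ p ∈ convexHull ℝ (toR '' X), ∑ j, A i j * p j ≤ b i := by
    intro i p hp
    have hsub : convexHull ℝ (toR '' X) ⊆ {p : Fin d → ℝ | ∑ j, A i j * p j ≤ b i} := by
      apply convexHull_min
      · rintro _ ⟨z, hz, rfl⟩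
        exact ((hrel z).mpr hz) i
      · exact convex_halfSpace_le (hlin i) (b i)
    exact hsub hp
  rcases H.eq_empty_or_nonempty with hE | ⟨h₀, hh₀⟩
  · simp [hE]
  haveI : Inhabited (Fin m) := ⟨f h₀ hh₀⟩
  set g : (Fin d → ℤ) → Fin m := fun h => if hh : h ∈ H then f h hh else default with hg
  apply Finset.card_le_card_of_injOn g (fun h _ => Finset.mem_univ _) ?_ |>.trans
  · simp
  · intro x hx y hy hxy
    by_contra hne
    simp only [Finset.mem_coe] at hx hy
    simp only [hg, dif_pos hx, dif_pos hy] at hxy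
    obtain ⟨p, hp1, hp2⟩ := hHhide x hx y hy hne
    set i := f x hx with hi
    have hfy : f y hy = i := hxy.symm
    -- the open halfspace > b i is convex and contains toR x, toR y
    have hgt : b i < ∑ j, A i j * p j := by
      have hsub : convexHull ℝ {toR x, toR y} ⊆ {p : Fin d → ℝ | b i < ∑ j, A i j * p j} := by
        apply convexHull_min
        · rintro q hq
          rcases hq with hq | hq
          · subst hq
            simpa [toR] using hf x hx
          · simp only [Set.mem_singleton_iff] at hq
            subst hq
            have := hf y hy
            rw [hfy] at this
            simpa [toR] using this
        · exact convex_halfSpace_gt (hlin i) (b i)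
      exact hsub hp1
    exact absurd (hvalid i p hp2) (not_le.mpr hgt)
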